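/- Let D ≥ 2 and suppose B₁,…,B_D ∈ M_N(ℂ) satisfy the SO(D)-covariance condition with respect to a representation τ of SO(D). Then there exists a constant C ∈ ℂ and a natural number n with 2n ≤ N such that det(i Σⱼ Bⱼ pⱼ) = C·(p₁² + ⋯ + p_D²)ⁿ for all p ∈ ℝ^D. Moreover, if N is odd then C = 0, i.e., the matrix Σⱼ Bⱼ pⱼ is singular for every p. -/

import Mathlib

open Matrix

section Aux
variable {D : ℕ} [NeZero D]

/-- rotation by angle with cos = c, sin = s in the (0,j) coordinate plane -/
def rotAux (j : Fin D) (c s : ℝ) : Matrix (Fin D) (Fin D) ℝ :=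
  1 + (c - 1) • (Matrix.single (0 : Fin D) 0 (1:ℝ) + Matrix.single j j 1)
    + s • Matrix.single j 0 (1:ℝ) + (-s) • Matrix.single (0 : Fin D) j (1:ℝ)

lemma halfAngle {c s : ℝ} (h : c^2 + s^2 = 1) :
    ∃ a b : ℝ, a^2 + b^2 = 1 ∧ a*a - b*b = c ∧ b*a + a*b = s := by
  have hc1 : -1 ≤ c := by nlinarith
  have hc2 : c ≤ 1 := by nlinarith
  set a := Real.sqrt ((1+c)/2) with ha
  set b0 := Real.sqrt ((1-c)/2) with hb0
  have ha2 : a^2 = (1+c)/2 := Real.sq_sqrt (by linarith)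
  have hb2 : b0^2 = (1-c)/2 := Real.sq_sqrt (by linarith)
  have hab : (a*b0)^2 = (s/2)^2 := by
    rw [mul_pow, ha2, hb2]; nlinarith
  have hab' : a*b0 = |s|/2 := by
    have h1 : 0 ≤ a * b0 := mul_nonneg (Real.sqrt_nonneg _) (Real.sqrt_nonneg _)
    have h2 : (a*b0)^2 = (|s|/2)^2 := by rw [hab, div_pow, div_pow, sq_abs]
    nlinarith [abs_nonneg s]
  rcases le_or_gt 0 s with hs | hs
  · exact ⟨a, b0, by nlinarith, by nlinarith, by rw [abs_of_nonneg hs] at hab'; nlinarith⟩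
  · exact ⟨a, -b0, by nlinarith, by nlinarith, by rw [abs_of_neg hs] at hab'; nlinarith⟩

lemma rotAux_mul {j : Fin D} (hj : j ≠ 0) (c1 s1 c2 s2 : ℝ) :
    rotAux j c1 s1 * rotAux j c2 s2 = rotAux j (c1*c2 - s1*s2) (s1*c2 + c1*s2) := by
  have h1 : ∀ (a b : Fin D) (c d : ℝ),
      Matrix.single a j c * Matrix.single 0 b d = 0 :=
    fun a b c d => Matrix.single_mul_single_of_ne (c := c) a j 0 hj d
  have h2 : ∀ (a b : Fin D) (c d : ℝ),
      Matrix.single a 0 c * Matrix.single j b d = 0 :=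
    fun a b c d => Matrix.single_mul_single_of_ne (c := c) a 0 j hj.symm d
  simp only [rotAux, add_mul, mul_add, smul_mul_assoc, mul_smul_comm, one_mul, mul_one,
    Matrix.single_mul_single_same, h1, h2, smul_zero, smul_smul]
  module

lemma stdBM_transpose (i j : Fin D) (c : ℝ) :
    (Matrix.single i j c)ᵀ = Matrix.single j i c := by
  ext a b; simp [Matrix.single, and_comm]

lemma rotAux_transpose (j : Fin D) (c s : ℝ) :
    (rotAux j c s)ᵀ = rotAux j c (-s) := by
  simp only [rotAux, transpose_add, transpose_smul, Matrix.transpose_one, stdBM_transpose]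
  module

lemma rotAux_one (j : Fin D) : rotAux j 1 0 = 1 := by
  simp [rotAux]

lemma rotAux_orth {j : Fin D} (hj : j ≠ 0) {c s : ℝ} (h : c^2 + s^2 = 1) :
    (rotAux j c s)ᵀ * rotAux j c s = 1 := by
  rw [rotAux_transpose, rotAux_mul hj]
  have h1 : c*c - -s*s = 1 := by nlinarith
  have h2 : -s*c + c*s = 0 := by ring
  rw [h1, h2, rotAux_one]

lemma rotAux_orth' {j : Fin D} (hj : j ≠ 0) {c s : ℝ} (h : c^2 + s^2 = 1) :
    rotAux j c s * (rotAux j c s)ᵀ = 1 := by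
  rw [rotAux_transpose, rotAux_mul hj]
  have h1 : c*c - s * -s = 1 := by nlinarith
  have h2 : s*c + c * -s = 0 := by ring
  rw [h1, h2, rotAux_one]

lemma rotAux_det {j : Fin D} (hj : j ≠ 0) {c s : ℝ} (h : c^2 + s^2 = 1) :
    (rotAux j c s).det = 1 := by
  obtain ⟨a, b, hab, hc, hs⟩ := halfAngle h
  have hsq : rotAux j a b * rotAux j a b = rotAux j c s := by
    rw [rotAux_mul hj, hc, hs]
  have hnn : 0 ≤ (rotAux j c s).det := by
    rw [← hsq, det_mul]; exact mul_self_nonneg _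
  have h1 : (rotAux j c s).det * (rotAux j c s).det = 1 := by
    have := congrArg det (rotAux_orth hj h)
    rwa [det_mul, det_transpose, det_one] at this
  nlinarith

lemma rotAux_vecSum {j : Fin D} (hj : j ≠ 0) (c s : ℝ) (p : Fin D → ℝ) (k : Fin D) :
    ∑ i, p i * rotAux j c s i k =
      if k = 0 then c * p 0 + s * p j else if k = j then -s * p 0 + c * p j else p k := by
  simp only [rotAux, Matrix.add_apply, Matrix.smul_apply, Matrix.one_apply, Matrix.single, of_apply,
    smul_eq_mul, mul_add, mul_ite, mul_one, mul_zero, mul_neg, Finset.sum_add_distrib,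
    Finset.sum_ite_eq, Finset.sum_ite_eq', Finset.mem_univ, if_true, ite_and]
  rcases eq_or_ne k 0 with rfl | hk0
  · simp [hj, eq_comm]
    ring
  · rcases eq_or_ne k j with rfl | hkj
    · simp [hj, Ne.symm hj, eq_comm, hk0]
      ring
    · simp [Ne.symm hk0, Ne.symm hkj, eq_comm, hk0, hkj]

/-- rotation as a unit -/
def rotGL {j : Fin D} (hj : j ≠ 0) {c s : ℝ} (h : c^2 + s^2 = 1) :
    Matrix.GeneralLinearGroup (Fin D) ℝ :=
  ⟨rotAux j c s, (rotAux j c s)ᵀ, rotAux_orth' hj h, rotAux_orth hj h⟩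

end Aux

theorem stmt5 (D N : ℕ) (hD : 2 ≤ D)
    (G : Subgroup (Matrix.GeneralLinearGroup (Fin D) ℝ))
    -- G is SO(D)
    (hG : ∀ g : Matrix.GeneralLinearGroup (Fin D) ℝ,
      g ∈ G ↔ ((Units.val g)ᵀ * Units.val g = 1 ∧ (Units.val g).det = 1))
    (τ : G →* Matrix.GeneralLinearGroup (Fin N) ℂ)
    (B : Fin D → Matrix (Fin N) (Fin N) ℂ)
    -- B satisfies the SO(D)-covariance condition with respect to τ
    (hcov : ∀ (g : G) (j : Fin D),
      ∑ k, (Units.val (g : Matrix.GeneralLinearGroup (Fin D) ℝ)) j k •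
        (Units.val (τ g) * B k * Units.val ((τ g)⁻¹)) = B j) :
    ∃ (C : ℂ) (n : ℕ), 2 * n ≤ N ∧
      (∀ p : Fin D → ℝ,
        (Complex.I • ∑ j, ((p j : ℝ) : ℂ) • B j).det = C * (∑ j, ((p j : ℝ) : ℂ) ^ 2) ^ n) ∧
      (Odd N → C = 0 ∧ ∀ p : Fin D → ℝ, (∑ j, ((p j : ℝ) : ℂ) • B j).det = 0) := by
  haveI : NeZero D := ⟨by omega⟩
  set f : (Fin D → ℝ) → ℂ := fun p => (∑ j, ((p j : ℝ) : ℂ) • B j).det with hf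
  -- invariance of f under G
  have key : ∀ (g : G) (p : Fin D → ℝ),
      f p = f (fun k => ∑ i, p i * (Units.val (g : Matrix.GeneralLinearGroup (Fin D) ℝ)) i k) := by
    intro g p
    set M := Units.val (τ g) with hM
    set a : Matrix (Fin D) (Fin D) ℝ := Units.val (g : Matrix.GeneralLinearGroup (Fin D) ℝ) with ha
    have hMinv : Units.val ((τ g)⁻¹) = M⁻¹ := Matrix.coe_units_inv (τ g)
    have hrs : ∀ (r : ℝ) (A : Matrix (Fin N) (Fin N) ℂ), r • A = (r : ℂ) • A := by
      intro r A
      rw [← Complex.coe_algebraMap, algebraMap_smul]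
    have expand : ∑ j, ((p j : ℝ) : ℂ) • B j
        = M * (∑ k, ((∑ i, p i * a i k : ℝ) : ℂ) • B k) * M⁻¹ := by
      calc ∑ j, ((p j : ℝ) : ℂ) • B j
          = ∑ j, ((p j : ℝ) : ℂ) • ∑ k, a j k • (M * B k * M⁻¹) :=
            Finset.sum_congr rfl (fun j _ => by rw [← hcov g j, hMinv])
        _ = ∑ j, ∑ k, (((p j * a j k : ℝ)) : ℂ) • (M * B k * M⁻¹) := by
            refine Finset.sum_congr rfl (fun j _ => ?_)
            rw [Finset.smul_sum]
            refine Finset.sum_congr rfl (fun k _ => ?_)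
            rw [hrs, smul_smul]
            push_cast
            ring_nf
        _ = ∑ k, ∑ j, (((p j * a j k : ℝ)) : ℂ) • (M * B k * M⁻¹) := Finset.sum_comm
        _ = ∑ k, ((∑ i, p i * a i k : ℝ) : ℂ) • (M * B k * M⁻¹) := by
            refine Finset.sum_congr rfl (fun k _ => ?_)
            rw [← Finset.sum_smul]
            push_cast
            ring_nf
        _ = M * (∑ k, ((∑ i, p i * a i k : ℝ) : ℂ) • B k) * M⁻¹ := by
            rw [Finset.mul_sum, Finset.sum_mul]
            refine Finset.sum_congr rfl (fun k _ => ?_)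
            rw [mul_smul_comm, smul_mul_assoc]
    simp only [hf]
    rw [expand, Matrix.det_conj (Units.isUnit (τ g))]
  -- one reduction step: rotate coordinate j into coordinate 0
  have step : ∀ (j : Fin D), j ≠ 0 → ∀ p : Fin D → ℝ,
      f p = f (Function.update (Function.update p j 0) 0 (Real.sqrt (p 0^2 + p j^2))) := by
    intro j hj p
    by_cases h0 : p 0 = 0 ∧ p j = 0
    · have : Function.update (Function.update p j 0) 0 (Real.sqrt (p 0^2 + p j^2)) = p := by
        funext k
        rcases eq_or_ne k 0 with rfl | hk0
        · rw [Function.update_self, h0.1, h0.2]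
          simp
        · rw [Function.update_of_ne hk0]
          rcases eq_or_ne k j with rfl | hkj
          · rw [Function.update_self, h0.2]
          · rw [Function.update_of_ne hkj]
      rw [this]
    · set r := Real.sqrt (p 0^2 + p j^2) with hr
      have hpos : 0 < p 0^2 + p j^2 := by
        rcases not_and_or.mp h0 with h | h <;>
          nlinarith [sq_nonneg (p 0), sq_nonneg (p j), mul_self_pos.mpr h]
      have hrpos : 0 < r := Real.sqrt_pos.mpr hpos
      have hr2 : r^2 = p 0^2 + p j^2 := Real.sq_sqrt hpos.le
      set c := p 0 / r with hc
      set s := p j / r with hs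
      have hcs : c^2 + s^2 = 1 := by
        rw [hc, hs, div_pow, div_pow, ← add_div, hr2]
        field_simp
      have hmem : rotGL hj hcs ∈ G := by
        rw [hG]
        exact ⟨rotAux_orth hj hcs, rotAux_det hj hcs⟩
      have := key ⟨rotGL hj hcs, hmem⟩ p
      rw [this]
      congr 1
      funext k
      have hval : Units.val ((⟨rotGL hj hcs, hmem⟩ : G) : Matrix.GeneralLinearGroup (Fin D) ℝ)
          = rotAux j c s := rfl
      rw [hval, rotAux_vecSum hj]
      rcases eq_or_ne k 0 with rfl | hk0
      · rw [if_pos rfl, Function.update_self, hc, hs]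
        field_simp
        nlinarith
      · rw [if_neg hk0, Function.update_of_ne hk0]
        rcases eq_or_ne k j with rfl | hkj
        · rw [if_pos rfl, Function.update_self, hc, hs]
          field_simp
          ring
        · rw [if_neg hkj, Function.update_of_ne hkj]
  -- sum of squares is preserved by a step
  have sumsq : ∀ (j : Fin D), j ≠ 0 → ∀ p : Fin D → ℝ,
      ∑ i, (Function.update (Function.update p j 0) 0 (Real.sqrt (p 0^2 + p j^2))) i ^ 2
        = ∑ i, p i ^ 2 := by
    intro j hj p
    have split : ∀ v : Fin D → ℝ, ∑ i, v i ^2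
        = v 0 ^2 + v j ^2 + ∑ i ∈ (Finset.univ.erase 0).erase j, v i ^2 := by
      intro v
      rw [← Finset.add_sum_erase _ _ (Finset.mem_univ 0)]
      rw [← Finset.add_sum_erase _ (fun i => v i ^2) (Finset.mem_erase.mpr ⟨hj, Finset.mem_univ j⟩)]
      ring
    rw [split, split p]
    have h0 : Function.update (Function.update p j 0) 0 (Real.sqrt (p 0^2 + p j^2)) 0
        = Real.sqrt (p 0^2 + p j^2) := Function.update_self _ _ _
    have hjv : Function.update (Function.update p j 0) 0 (Real.sqrt (p 0^2 + p j^2)) j = 0 := by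
      rw [Function.update_of_ne hj, Function.update_self]
    rw [h0, hjv, Real.sq_sqrt (by positivity)]
    have : ∀ i ∈ (Finset.univ.erase 0).erase j,
        Function.update (Function.update p j 0) 0 (Real.sqrt (p 0^2 + p j^2)) i ^2 = p i ^2 := by
      intro i hi
      rw [Finset.mem_erase] at hi
      obtain ⟨hij, hi0⟩ := hi
      rw [Finset.mem_erase] at hi0
      rw [Function.update_of_ne hi0.1, Function.update_of_ne hij]
    rw [Finset.sum_congr rfl this]
    ring
  -- the full reduction
  have A : ∀ m : ℕ, ∀ p : Fin D → ℝ, (∀ i : Fin D, m ≤ (i : ℕ) → i ≠ 0 → p i = 0) →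
      f p = f (fun k => if k = 0 then Real.sqrt (∑ i, p i ^ 2) else 0) := by
    intro m
    induction m with
    | zero =>
      intro p hp
      set j1 : Fin D := ⟨1, by omega⟩ with hj1
      have hj1ne : j1 ≠ 0 := by
        intro h
        have := congrArg Fin.val h
        simp [hj1] at this
      rw [step j1 hj1ne p]
      congr 1
      funext k
      have hpj1 : p j1 = 0 := hp j1 (by omega) hj1ne
      have hsum : ∑ i, p i ^2 = p 0 ^2 := by
        refine Finset.sum_eq_single_of_mem 0 (Finset.mem_univ 0) (fun i _ hi => ?_)
        rw [hp i (by omega) hi]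
        ring
      rcases eq_or_ne k 0 with rfl | hk0
      · rw [Function.update_self, if_pos rfl, hsum, hpj1]
        ring_nf
      · rw [Function.update_of_ne hk0, if_neg hk0]
        rcases eq_or_ne k j1 with rfl | hkj
        · rw [Function.update_self]
        · rw [Function.update_of_ne hkj]
          exact hp k (by omega) hk0
    | succ m IH =>
      intro p hp
      by_cases hm : m < D ∧ 1 ≤ m
      · set j : Fin D := ⟨m, hm.1⟩ with hjdef
        have hjne : j ≠ 0 := by
          intro h
          have := congrArg Fin.val h
          simp [hjdef] at this
          omega
        rw [step j hjne p]
        rw [IH _ ?hyp]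
        · rw [sumsq j hjne p]
        case hyp =>
          intro i hi hi0
          rcases eq_or_ne i j with rfl | hij
          · rw [Function.update_of_ne hi0, Function.update_self]
          · rw [Function.update_of_ne hi0, Function.update_of_ne hij]
            have : (i : ℕ) ≠ m := by
              intro h
              exact hij (Fin.ext (by simp [hjdef, h]))
            exact hp i (by omega) hi0
      · apply IH p
        intro i hi hi0
        have hiv : (i : ℕ) ≠ 0 := by
          intro h
          exact hi0 (Fin.ext (by simp [h]))
        have hiD : (i : ℕ) < D := i.isLt
        exact hp i (by omega) hi0
  -- f p = r^N * det (B 0)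
  have hf0 : ∀ p : Fin D → ℝ,
      f p = ((Real.sqrt (∑ i, p i ^ 2) : ℝ) : ℂ) ^ N * (B 0).det := by
    intro p
    rw [A D p (fun i hi _ => absurd i.isLt (by omega))]
    simp only [hf]
    have : (∑ j, (((if j = 0 then Real.sqrt (∑ i, p i ^ 2) else 0 : ℝ)) : ℂ) • B j)
        = ((Real.sqrt (∑ i, p i ^ 2) : ℝ) : ℂ) • B 0 := by
      rw [Finset.sum_eq_single_of_mem 0 (Finset.mem_univ 0) (fun j _ hj => by
        rw [if_neg hj]; simp)]
      rw [if_pos rfl]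
    rw [this, Matrix.det_smul, Fintype.card_fin]
  rcases Nat.even_or_odd N with heven | hodd
  · -- even case
    obtain ⟨n, hn⟩ := heven
    refine ⟨Complex.I ^ N * (B 0).det, n, by omega, ?_, ?_⟩
    · intro p
      rw [Matrix.det_smul, Fintype.card_fin]
      have : (f p : ℂ) = ((Real.sqrt (∑ i, p i ^ 2) : ℝ) : ℂ) ^ N * (B 0).det := hf0 p
      simp only [hf] at this
      rw [this]
      have hcast : (∑ j, ((p j : ℝ) : ℂ) ^ 2) = ((∑ i, p i ^ 2 : ℝ) : ℂ) := by
        push_cast; ring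
      rw [hcast]
      have hsqrt : ((Real.sqrt (∑ i, p i ^ 2) : ℝ) : ℂ) ^ N
          = ((∑ i, p i ^ 2 : ℝ) : ℂ) ^ n := by
        have h2 : ((Real.sqrt (∑ i, p i ^ 2) : ℝ) : ℂ) ^ 2 = ((∑ i, p i ^ 2 : ℝ) : ℂ) := by
          rw [← Complex.ofReal_pow, Real.sq_sqrt (by positivity)]
        rw [hn, ← two_mul, pow_mul, h2]
      rw [hsqrt]
      ring
    · intro hodd
      exact absurd hodd (by simp [hn, Nat.not_odd_iff_even.mpr ⟨n, hn⟩])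
  · -- odd case
    have hzero : ∀ p : Fin D → ℝ, f p = 0 := by
      intro p
      have h1 : f (fun i => -p i) = (-1 : ℂ) ^ N * f p := by
        simp only [hf]
        have : (∑ j, (((-p j : ℝ)) : ℂ) • B j) = (-1 : ℂ) • ∑ j, ((p j : ℝ) : ℂ) • B j := by
          rw [Finset.smul_sum]
          refine Finset.sum_congr rfl (fun j _ => ?_)
          rw [smul_smul]
          push_cast
          ring_nf
        rw [this, Matrix.det_smul, Fintype.card_fin]
      have h2 : f (fun i => -p i) = f p := by
        rw [hf0, hf0 p]
        have hsum : (∑ i, (-p i) ^ 2) = ∑ i, p i ^ 2 :=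
          Finset.sum_congr rfl (fun i _ => by ring)
        rw [hsum]
      rw [h1, hodd.neg_one_pow] at h2
      linear_combination (-1/2 : ℂ) * h2
    refine ⟨0, 0, by omega, ?_, fun _ => ⟨rfl, fun p => hzero p⟩⟩
    intro p
    rw [Matrix.det_smul, Fintype.card_fin]
    have := hzero p
    simp only [hf] at this
    rw [this]
    ring
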